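/- Let 0 < r₀ < r₁ ≤ ∞ and let h, p, μ₀, μ₁, λ : ℝ → ℝ be functions such that on the open interval (r₀, r₁): h and p are twice differentiable and strictly positive, μ₀ and μ₁ are differentiable, and for every r ∈ (r₀, r₁) both h(r)·p′(r)/p(r) = 4π r (μ₀(r) + μ₁(r)) and (d/dr)(r·h(r)) = 1 − 8π r² μ₀(r) hold. Then for every r ∈ (r₀, r₁), the equation (1/(2 p(r)))·(d/ds)[ (d/ds)(p(s)² h(s))/p(s) ](r) + (1/(r p(r)))·(d/ds)(p(s) h(s))(r) = 8π λ(r) holds if and only if λ(r) = (1/4)(3 μ₁(r) − μ₀(r)) + (r/2) μ₁′(r) + (μ₀(r) + μ₁(r))(1 + 8π r² μ₁(r))/(4 h(r)). -/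

import Mathlib

open Real

/-- The generalized Tolman–Oppenheimer–Volkoff equation: for a static spherically
symmetric metric `-p²h dτ² + h⁻¹dr² + r²dσ²` on the radial interval `(r₀, r₁)`,
given the field equations `h p'/p = 4πr(μ₀+μ₁)` and `(rh)' = 1 - 8πr²μ₀`, the
remaining field equation holds at `r` iff
`λ = ¼(3μ₁ - μ₀) + (r/2)μ₁' + (μ₀+μ₁)(1+8πr²μ₁)/(4h)`. -/
theorem generalized_TOV (r₀ : ℝ) (r₁ : EReal) (hr₀ : 0 < r₀) (hr₀r₁ : (r₀ : EReal) < r₁)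
    (h p μ₀ μ₁ lam : ℝ → ℝ)
    (hh : ∀ r : ℝ, r₀ < r → (r : EReal) < r₁ →
      DifferentiableAt ℝ h r ∧ DifferentiableAt ℝ (deriv h) r ∧ 0 < h r)
    (hp : ∀ r : ℝ, r₀ < r → (r : EReal) < r₁ →
      DifferentiableAt ℝ p r ∧ DifferentiableAt ℝ (deriv p) r ∧ 0 < p r)
    (hμ₀ : ∀ r : ℝ, r₀ < r → (r : EReal) < r₁ → DifferentiableAt ℝ μ₀ r)
    (hμ₁ : ∀ r : ℝ, r₀ < r → (r : EReal) < r₁ → DifferentiableAt ℝ μ₁ r)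
    (heq1 : ∀ r : ℝ, r₀ < r → (r : EReal) < r₁ →
      h r * deriv p r / p r = 4 * π * r * (μ₀ r + μ₁ r))
    (heq2 : ∀ r : ℝ, r₀ < r → (r : EReal) < r₁ →
      deriv (fun s => s * h s) r = 1 - 8 * π * r ^ 2 * μ₀ r) :
    ∀ r : ℝ, r₀ < r → (r : EReal) < r₁ →
      ((1 / (2 * p r)) * deriv (fun s => deriv (fun u => p u ^ 2 * h u) s / p s) r
          + (1 / (r * p r)) * deriv (fun s => p s * h s) r = 8 * π * lam r
        ↔ lam r = (1 / 4) * (3 * μ₁ r - μ₀ r) + (r / 2) * deriv μ₁ r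
            + (μ₀ r + μ₁ r) * (1 + 8 * π * r ^ 2 * μ₁ r) / (4 * h r)) := by
  intro r hrl hru
  obtain ⟨x, hrx, hxr₁⟩ := EReal.lt_iff_exists_real_btwn.mp hru
  have hrx' : r < x := EReal.coe_lt_coe_iff.mp hrx
  have hmem : Set.Ioo r₀ x ∈ nhds r := isOpen_Ioo.mem_nhds ⟨hrl, hrx'⟩
  have key : ∀ s ∈ Set.Ioo r₀ x, r₀ < s ∧ (s : EReal) < r₁ := fun s hs =>
    ⟨hs.1, lt_trans (EReal.coe_lt_coe_iff.mpr hs.2) hxr₁⟩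
  -- differentiability at r
  obtain ⟨dh, dh', hHpos⟩ := hh r hrl hru
  obtain ⟨dp, dp', hPpos⟩ := hp r hrl hru
  have dμ₀r := hμ₀ r hrl hru
  have dμ₁r := hμ₁ r hrl hru
  have hrpos : 0 < r := lt_trans hr₀ hrl
  have hrne : r ≠ 0 := ne_of_gt hrpos
  have hHne : h r ≠ 0 := ne_of_gt hHpos
  have hPne : p r ≠ 0 := ne_of_gt hPpos
  -- Eventual equality 1: the inner quotient simplifies
  have ev1 : (fun s => deriv (fun u => p u ^ 2 * h u) s / p s)
      =ᶠ[nhds r] fun s => 2 * deriv p s * h s + p s * deriv h s := by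
    refine Filter.eventuallyEq_of_mem hmem fun s hs => ?_
    obtain ⟨h1, _, _⟩ := hh s (key s hs).1 (key s hs).2
    obtain ⟨p1, _, p3⟩ := hp s (key s hs).1 (key s hs).2
    have e1 : deriv (fun u => p u ^ 2 * h u) s
        = (2 * p s ^ 1 * deriv p s) * h s + p s ^ 2 * deriv h s := by
      have H : HasDerivAt (fun u => p u ^ 2 * h u)
          ((2 * p s ^ 1 * deriv p s) * h s + p s ^ 2 * deriv h s) s := by
        have := (p1.hasDerivAt.pow 2).mul h1.hasDerivAt
        refine this.congr_deriv ?_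
        simp only [Pi.pow_apply]
        norm_num
      exact H.deriv
    show deriv (fun u => p u ^ 2 * h u) s / p s = _
    rw [e1]
    field_simp
  -- Eventual equality 2 : from heq2
  have ev2 : (fun s => h s + s * deriv h s)
      =ᶠ[nhds r] fun s => 1 - 8 * π * s ^ 2 * μ₀ s := by
    refine Filter.eventuallyEq_of_mem hmem fun s hs => ?_
    obtain ⟨h1, _, _⟩ := hh s (key s hs).1 (key s hs).2
    have t := heq2 s (key s hs).1 (key s hs).2
    have t2 : deriv (fun y => y * h y) s = 1 * h s + s * deriv h s :=
      ((hasDerivAt_id' s).mul h1.hasDerivAt).deriv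
    rw [t2] at t
    show h s + s * deriv h s = _
    linarith
  -- Eventual equality 3 : from heq1
  have ev3 : (fun s => h s * deriv p s)
      =ᶠ[nhds r] fun s => 4 * π * s * (μ₀ s + μ₁ s) * p s := by
    refine Filter.eventuallyEq_of_mem hmem fun s hs => ?_
    obtain ⟨_, _, p3⟩ := hp s (key s hs).1 (key s hs).2
    have t := heq1 s (key s hs).1 (key s hs).2
    rw [div_eq_iff (ne_of_gt p3)] at t
    exact t
  -- derivative computation A
  have dA : HasDerivAt (fun s => 2 * deriv p s * h s + p s * deriv h s)
      (2 * deriv (deriv p) r * h r + 2 * deriv p r * deriv h r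
        + (deriv p r * deriv h r + p r * deriv (deriv h) r)) r := by
    have := ((dp'.hasDerivAt.const_mul 2).mul dh.hasDerivAt).add (dp.hasDerivAt.mul dh'.hasDerivAt)
    refine this.congr_deriv ?_
    ring
  have EA : deriv (fun s => deriv (fun u => p u ^ 2 * h u) s / p s) r
      = 2 * deriv (deriv p) r * h r + 2 * deriv p r * deriv h r
        + (deriv p r * deriv h r + p r * deriv (deriv h) r) :=
    ev1.deriv_eq.trans dA.deriv
  -- derivative computation B
  have EB : deriv (fun s => p s * h s) r = deriv p r * h r + p r * deriv h r :=
    (dp.hasDerivAt.mul dh.hasDerivAt).deriv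
  -- F2 : heq2 at r
  have F2 : h r + r * deriv h r = 1 - 8 * π * r ^ 2 * μ₀ r := by
    have t := heq2 r hrl hru
    have t2 : deriv (fun y => y * h y) r = 1 * h r + r * deriv h r :=
      ((hasDerivAt_id' r).mul dh.hasDerivAt).deriv
    rw [t2] at t
    linarith
  -- F3 : derivative of heq2
  have F3 : deriv h r + (1 * deriv h r + r * deriv (deriv h) r)
      = -(16 * π * r * μ₀ r + 8 * π * r ^ 2 * deriv μ₀ r) := by
    have dL : HasDerivAt (fun s => h s + s * deriv h s)
        (deriv h r + (1 * deriv h r + r * deriv (deriv h) r)) r :=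
      dh.hasDerivAt.add ((hasDerivAt_id' r).mul dh'.hasDerivAt)
    have dR : HasDerivAt (fun s : ℝ => 1 - 8 * π * s ^ 2 * μ₀ s)
        (-(16 * π * r * μ₀ r + 8 * π * r ^ 2 * deriv μ₀ r)) r := by
      have H := (((hasDerivAt_pow 2 r).const_mul (8 * π)).mul dμ₀r.hasDerivAt).const_sub 1
      refine H.congr_deriv ?_
      rw [show (2:ℕ) - 1 = 1 from rfl]
      push_cast
      ring
    calc deriv h r + (1 * deriv h r + r * deriv (deriv h) r)
        = deriv (fun s => h s + s * deriv h s) r := dL.deriv.symm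
      _ = deriv (fun s : ℝ => 1 - 8 * π * s ^ 2 * μ₀ s) r := ev2.deriv_eq
      _ = -(16 * π * r * μ₀ r + 8 * π * r ^ 2 * deriv μ₀ r) := dR.deriv
  -- F1 : heq1 at r
  have F1 : h r * deriv p r = 4 * π * r * (μ₀ r + μ₁ r) * p r := by
    have t := heq1 r hrl hru
    rw [div_eq_iff hPne] at t
    exact t
  -- F4 : derivative of heq1
  have F4 : deriv h r * deriv p r + h r * deriv (deriv p) r
      = 4 * π * (μ₀ r + μ₁ r) * p r + 4 * π * r * (deriv μ₀ r + deriv μ₁ r) * p r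
        + 4 * π * r * (μ₀ r + μ₁ r) * deriv p r := by
    have dL : HasDerivAt (fun s => h s * deriv p s)
        (deriv h r * deriv p r + h r * deriv (deriv p) r) r :=
      dh.hasDerivAt.mul dp'.hasDerivAt
    have dR : HasDerivAt (fun s => 4 * π * s * (μ₀ s + μ₁ s) * p s)
        (4 * π * (μ₀ r + μ₁ r) * p r + 4 * π * r * (deriv μ₀ r + deriv μ₁ r) * p r
          + 4 * π * r * (μ₀ r + μ₁ r) * deriv p r) r := by
      have H := (((hasDerivAt_id' r).const_mul (4 * π)).mul
        (dμ₀r.hasDerivAt.add dμ₁r.hasDerivAt)).mul dp.hasDerivAt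
      refine H.congr_deriv ?_
      norm_num
      ring
    calc deriv h r * deriv p r + h r * deriv (deriv p) r
        = deriv (fun s => h s * deriv p s) r := dL.deriv.symm
      _ = deriv (fun s => 4 * π * s * (μ₀ s + μ₁ s) * p s) r := ev3.deriv_eq
      _ = _ := dR.deriv
  -- solve for the derivatives
  have eP' : deriv p r = 4 * π * r * (μ₀ r + μ₁ r) * p r / h r := by
    field_simp
    linear_combination F1
  have eH' : deriv h r = (1 - 8 * π * r ^ 2 * μ₀ r - h r) / r := by
    field_simp
    linear_combination F2
  have eH'' : deriv (deriv h) r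
      = (-(16 * π * r * μ₀ r + 8 * π * r ^ 2 * deriv μ₀ r) - 2 * deriv h r) / r := by
    field_simp
    linear_combination F3
  have eP'' : deriv (deriv p) r
      = (4 * π * (μ₀ r + μ₁ r) * p r + 4 * π * r * (deriv μ₀ r + deriv μ₁ r) * p r
          + 4 * π * r * (μ₀ r + μ₁ r) * deriv p r - deriv h r * deriv p r) / h r := by
    field_simp
    linear_combination F4
  rw [EA, EB, eP'', eH'', eP', eH']
  constructor
  · intro hl
    have h8 : (8 : ℝ) * π ≠ 0 := by positivity
    apply mul_left_cancel₀ h8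
    rw [← hl]
    field_simp
    ring
  · intro hl
    rw [hl]
    field_simp
    ring
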